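/- For any absolutely continuous function x : [0,1] → ℝ with x' ∈ L^∞, x(0) = x(1), and ∫_0^1 x(t) dt = 0, one has max_{t∈[0,1]} |x(t)| ≤ (1/4)·ess sup_{t∈[0,1]} |x'(t)|, and the constant 1/4 = K_1 is best possible. -/

import Mathlib

open MeasureTheory intervalIntegral
lemma lin_int (c d a b : ℝ) :
    (∫ s in a..b, (c + d * s)) = c * (b - a) + d * (b ^ 2 - a ^ 2) / 2 := by
  have : (∫ s in a..b, (c + d * s)) = (∫ s in a..b, (c:ℝ)) + ∫ s in a..b, d * s :=
    intervalIntegral.integral_add intervalIntegrable_const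
      ((continuous_const.mul continuous_id).intervalIntegrable _ _)
  rw [this, intervalIntegral.integral_const_mul, integral_id, intervalIntegral.integral_const,
    smul_eq_mul]
  ring

lemma half_bound (x : ℝ → ℝ) (S : ℝ)
    (hx : ContinuousOn x (Set.Icc 0 1))
    (hlip : ∀ a b : ℝ, 0 ≤ a → a ≤ b → b ≤ 1 → |x b - x a| ≤ S * (b - a))
    (hper : x 0 = x 1)
    (hmean : (∫ t in (0:ℝ)..1, x t) = 0)
    (t : ℝ) (ht : t ∈ Set.Icc (0:ℝ) 1) : x t ≤ S / 4 := by
  obtain ⟨ht0, ht1⟩ := ht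
  have hlip2 : ∀ a b : ℝ, 0 ≤ a → a ≤ b → b ≤ 1 → |x b - x a| ≤ S * (1 - (b - a)) := by
    intro a b ha hab hb1
    have h1 := hlip 0 a le_rfl ha (hab.trans hb1)
    have h2 := hlip b 1 (ha.trans hab) hb1 le_rfl
    have e : x b - x a = -(x 1 - x b) - (x a - x 0) := by rw [hper]; ring
    have := abs_sub (-(x 1 - x b)) (x a - x 0)
    rw [abs_neg] at this
    rw [e]
    refine this.trans ?_
    linarith
  have hxint : ∀ a b : ℝ, 0 ≤ a → a ≤ b → b ≤ 1 → IntervalIntegrable x volume a b := by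
    intro a b ha hab hb
    exact (hx.mono (by rw [Set.uIcc_of_le hab]; exact Set.Icc_subset_Icc ha hb)).intervalIntegrable
  have lower : ∀ a b c d : ℝ, 0 ≤ a → a ≤ b → b ≤ 1 →
      (∀ s ∈ Set.Icc a b, c + d * s ≤ x s) →
      c * (b - a) + d * (b ^ 2 - a ^ 2) / 2 ≤ ∫ s in a..b, x s := by
    intro a b c d ha hab hb h
    rw [← lin_int]
    exact intervalIntegral.integral_mono_on hab
      ((continuous_const.add (continuous_const.mul continuous_id)).intervalIntegrable _ _)
      (hxint a b ha hab hb) h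
  rcases le_or_gt t (1/2) with hcase | hcase
  · have hu1 : t + 1/2 ≤ 1 := by linarith
    have htu : t ≤ t + 1/2 := by linarith
    have hu0 : (0:ℝ) ≤ t + 1/2 := by linarith
    have h1 := intervalIntegral.integral_add_adjacent_intervals
      (hxint 0 t le_rfl ht0 ht1) (hxint t (t+1/2) ht0 htu hu1)
    have h2 := intervalIntegral.integral_add_adjacent_intervals
      (hxint 0 (t+1/2) le_rfl hu0 hu1) (hxint (t+1/2) 1 hu0 hu1 le_rfl)
    have hA := lower 0 t (x t - S * t) S le_rfl ht0 ht1 (by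
      intro s hs
      have := abs_le.1 (hlip s t hs.1 hs.2 ht1)
      nlinarith [this.2, sub_nonneg.2 hs.2])
    have hB := lower t (t+1/2) (x t + S * t) (-S) ht0 htu hu1 (by
      intro s hs
      have := abs_le.1 (hlip t s ht0 hs.1 (hs.2.trans hu1))
      nlinarith [this.1])
    have hC := lower (t+1/2) 1 (x t - S * (1 + t)) S hu0 hu1 le_rfl (by
      intro s hs
      have := abs_le.1 (hlip2 t s ht0 (htu.trans hs.1) hs.2)
      nlinarith [this.1])
    nlinarith [hA, hB, hC, h1, h2, hmean]
  · have hv0 : (0:ℝ) ≤ t - 1/2 := by linarith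
    have hvt : t - 1/2 ≤ t := by linarith
    have h1 := intervalIntegral.integral_add_adjacent_intervals
      (hxint 0 (t-1/2) le_rfl hv0 (hvt.trans ht1)) (hxint (t-1/2) t hv0 hvt ht1)
    have h2 := intervalIntegral.integral_add_adjacent_intervals
      (hxint 0 t le_rfl ht0 ht1) (hxint t 1 ht0 ht1 le_rfl)
    have hA := lower 0 (t-1/2) (x t - S * (1 - t)) (-S) le_rfl hv0 (hvt.trans ht1) (by
      intro s hs
      have := abs_le.1 (hlip2 s t hs.1 (hs.2.trans hvt) ht1)
      nlinarith [this.2])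
    have hB := lower (t-1/2) t (x t - S * t) S hv0 hvt ht1 (by
      intro s hs
      have := abs_le.1 (hlip s t (hv0.trans hs.1) hs.2 ht1)
      nlinarith [this.2])
    have hC := lower t 1 (x t + S * t) (-S) ht0 ht1 le_rfl (by
      intro s hs
      have := abs_le.1 (hlip t s ht0 hs.1 hs.2)
      nlinarith [this.1])
    nlinarith [hA, hB, hC, h1, h2, hmean]

lemma piece_int : ∀ a b : ℝ,
    IntervalIntegrable (fun s => if s < (1/2:ℝ) then (-1:ℝ) else 1) volume a b := by
  intro a b
  rw [intervalIntegrable_iff]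
  refine Measure.integrableOn_of_bounded (measure_Ioc_lt_top.ne)
    ((measurable_const.ite measurableSet_Iio measurable_const).aestronglyMeasurable)
    (M := 1) (ae_of_all _ fun t => ?_)
  by_cases h : t < (1/2:ℝ)
  · rw [Real.norm_eq_abs, if_pos h]; norm_num
  · rw [Real.norm_eq_abs, if_neg h]; norm_num

lemma half_ne : ∀ᵐ s : ℝ ∂volume, s ≠ 1/2 := by
  have h0 : volume ({(1/2 : ℝ)} : Set ℝ) = 0 := measure_singleton _
  rw [ae_iff]
  convert h0 using 2
  ext s
  simp

lemma prim_eq {t : ℝ} (ht : t ∈ Set.Icc (0:ℝ) 1) :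
    (∫ s in (0:ℝ)..t, (if s < (1/2:ℝ) then (-1:ℝ) else 1)) = |t - 1/2| - 1/2 := by
  obtain ⟨ht0, ht1⟩ := ht
  have base : ∀ u : ℝ, 0 ≤ u → u ≤ 1/2 →
      (∫ s in (0:ℝ)..u, (if s < (1/2:ℝ) then (-1:ℝ) else 1)) = -u := by
    intro u hu0 hu1
    rw [intervalIntegral.integral_congr_ae (g := fun _ => (-1:ℝ))
      (half_ne.mono fun s hs hmem => ?_)]
    · simp
    · rw [Set.uIoc_of_le hu0] at hmem
      have : s < 1/2 := lt_of_le_of_ne (hmem.2.trans hu1) hs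
      rw [if_pos this]
  rcases le_or_gt t (1/2) with h | h
  · rw [base t ht0 h, abs_of_nonpos (by linarith)]
    ring
  · have h2 : (∫ s in (1/2:ℝ)..t, (if s < (1/2:ℝ) then (-1:ℝ) else 1)) = t - 1/2 := by
      rw [intervalIntegral.integral_congr_ae (g := fun _ => (1:ℝ))
        (ae_of_all _ fun s hmem => ?_)]
      · simp
      · rw [Set.uIoc_of_le h.le] at hmem
        rw [if_neg (not_lt.2 hmem.1.le)]
    have hadd := intervalIntegral.integral_add_adjacent_intervals
      (piece_int 0 (1/2)) (piece_int (1/2) t)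
    rw [base (1/2) (by norm_num) le_rfl, h2] at hadd
    rw [← hadd, abs_of_nonneg (by linarith)]
    ring

/-- `x` belongs to `AC^{n-1}([0,T])`, its (a.e.) `n`-th derivative is `g`, and all the
derivatives of order `< n` satisfy the periodic boundary conditions `x⁽ⁱ⁾(0) = x⁽ⁱ⁾(T)`. -/
def PeriodicACSol (n : ℕ) (T : ℝ) (x g : ℝ → ℝ) : Prop :=
  ∃ D : ℕ → ℝ → ℝ,
    D 0 = x ∧ D n = g ∧
    ∀ i < n,
      IntervalIntegrable (D (i + 1)) volume 0 T ∧
      (∀ t ∈ Set.Icc (0 : ℝ) T, D i t = D i 0 + ∫ s in (0 : ℝ)..t, D (i + 1) s) ∧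
      D i 0 = D i T

/-- The Favard inequality for `n = 1` on `[0,1]`, with the sharp constant `K₁ = 1/4`:
any absolutely continuous `1`-periodic function with mean zero satisfies
`max |x| ≤ (1/4) · ess sup |x'|`, and `1/4` cannot be replaced by any smaller constant. -/
theorem favard_inequality_order_one :
    (∀ x g : ℝ → ℝ, PeriodicACSol 1 1 x g →
      (∃ M : ℝ, ∀ᵐ t ∂(volume.restrict (Set.Icc (0 : ℝ) 1)), |g t| ≤ M) →
      (∫ t in (0 : ℝ)..1, x t) = 0 →
      ∀ t ∈ Set.Icc (0 : ℝ) 1,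
        |x t| ≤ (1 / 4) * essSup (fun t => |g t|) (volume.restrict (Set.Icc (0 : ℝ) 1))) ∧
    ∀ c : ℝ, c < 1 / 4 →
      ∃ x g : ℝ → ℝ, PeriodicACSol 1 1 x g ∧
        (∃ M : ℝ, ∀ᵐ t ∂(volume.restrict (Set.Icc (0 : ℝ) 1)), |g t| ≤ M) ∧
        (∫ t in (0 : ℝ)..1, x t) = 0 ∧
        ∃ t ∈ Set.Icc (0 : ℝ) 1,
          c * essSup (fun t => |g t|) (volume.restrict (Set.Icc (0 : ℝ) 1)) < |x t| := by
  have hμ0 : (volume.restrict (Set.Icc (0:ℝ) 1)) ≠ 0 := by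
    rw [Ne, Measure.restrict_eq_zero]
    simp
  constructor
  · rintro x g ⟨D, hD0, hD1, hD⟩ ⟨M, hM⟩ hmean t ht
    obtain ⟨hgint, hrep, hper⟩ := hD 0 (by norm_num)
    rw [hD0] at hrep hper
    rw [show (0:ℕ) + 1 = 1 from rfl, hD1] at hgint hrep
    set S := essSup (fun t => |g t|) (volume.restrict (Set.Icc (0:ℝ) 1)) with hSdef
    have hbd : ∀ᵐ s ∂(volume.restrict (Set.Icc (0:ℝ) 1)), |g s| ≤ S :=
      ae_le_essSup ⟨M, Filter.eventually_map.2 hM⟩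
    have hS0 : 0 ≤ S := by
      by_contra hneg
      push_neg at hneg
      have : ∀ᵐ s ∂(volume.restrict (Set.Icc (0:ℝ) 1)), False :=
        hbd.mono fun s hs => absurd ((abs_nonneg (g s)).trans hs) (by linarith)
      rw [Filter.eventually_false_iff_eq_bot] at this
      exact (ae_neBot.2 hμ0).ne this
    have hlip : ∀ a b : ℝ, 0 ≤ a → a ≤ b → b ≤ 1 → |x b - x a| ≤ S * (b - a) := by
      intro a b ha hab hb
      have hxa := hrep a ⟨ha, hab.trans hb⟩
      have hxb := hrep b ⟨ha.trans hab, hb⟩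
      have hsub1 : Set.uIcc 0 a ⊆ Set.uIcc (0:ℝ) 1 := by
        rw [Set.uIcc_of_le ha, Set.uIcc_of_le (by norm_num : (0:ℝ) ≤ 1)]
        exact Set.Icc_subset_Icc le_rfl (hab.trans hb)
      have hsub2 : Set.uIcc a b ⊆ Set.uIcc (0:ℝ) 1 := by
        rw [Set.uIcc_of_le hab, Set.uIcc_of_le (by norm_num : (0:ℝ) ≤ 1)]
        exact Set.Icc_subset_Icc ha hb
      have hadd := intervalIntegral.integral_add_adjacent_intervals
        (hgint.mono_set hsub1) (hgint.mono_set hsub2)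
      have e : x b - x a = ∫ s in a..b, g s := by
        rw [hxa, hxb]
        linarith [hadd]
      rw [e, ← Real.norm_eq_abs]
      have hb2 : ∀ᵐ s ∂(volume.restrict (Set.uIoc a b)), ‖g s‖ ≤ S := by
        refine ae_restrict_of_ae_restrict_of_subset (t := Set.Icc (0:ℝ) 1) ?_
          (by simpa [Real.norm_eq_abs] using hbd)
        rw [Set.uIoc_of_le hab]
        exact (Set.Ioc_subset_Icc_self).trans (Set.Icc_subset_Icc ha hb)
      have := intervalIntegral.norm_integral_le_abs_of_norm_le (g := fun _ => S) hb2
        intervalIntegrable_const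
      rw [intervalIntegral.integral_const, smul_eq_mul,
        abs_of_nonneg (by nlinarith [sub_nonneg.2 hab])] at this
      linarith [this]
    have hcont : ContinuousOn x (Set.Icc 0 1) := by
      have h1 : IntegrableOn g (Set.uIcc 0 1) volume := by
        rw [Set.uIcc_of_le (by norm_num : (0:ℝ) ≤ 1), integrableOn_Icc_iff_integrableOn_Ioc]
        exact (intervalIntegrable_iff_integrableOn_Ioc_of_le (by norm_num)).1 hgint
      have h2 := intervalIntegral.continuousOn_primitive_interval (a := 0) (b := 1)
        (μ := volume) h1
      rw [Set.uIcc_of_le (by norm_num : (0:ℝ) ≤ 1)] at h2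
      exact (continuousOn_const.add h2).congr fun s hs => hrep s hs
    have hub := half_bound x S hcont hlip hper hmean t ht
    have hlb := half_bound (fun s => -x s) S hcont.neg
      (fun a b ha hab hb => by
        rw [show -x b - -x a = -(x b - x a) by ring, abs_neg]
        exact hlip a b ha hab hb)
      (by simp [hper]) (by rw [intervalIntegral.integral_neg, hmean]; ring) t ht
    rw [abs_le]
    constructor <;> linarith
  · intro c hc
    refine ⟨fun t => |t - 1/2| - 1/4, fun s => if s < (1/2:ℝ) then (-1:ℝ) else 1,
      ⟨fun i => if i = 0 then (fun t => |t - 1/2| - 1/4) else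
        (fun s => if s < (1/2:ℝ) then (-1:ℝ) else 1), rfl, rfl, ?_⟩, ⟨1, ae_of_all _ fun s => ?_⟩,
      ?_, 1/2, by norm_num, ?_⟩
    · intro i hi
      have hi0 : i = 0 := by omega
      subst hi0
      refine ⟨by simpa using piece_int 0 1, fun t ht => ?_, by norm_num⟩
      norm_num
      rw [prim_eq ht]
      ring
    · show |if s < (1/2:ℝ) then (-1:ℝ) else 1| ≤ 1
      by_cases h : s < (1/2:ℝ)
      · rw [if_pos h]; norm_num
      · rw [if_neg h]; norm_num
    · have e1 : (∫ t in (0:ℝ)..(1/2:ℝ), (|t - 1/2| - 1/4)) = 0 := by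
        rw [intervalIntegral.integral_congr (g := fun t => 1/4 + (-1) * t) ?_, lin_int]
        · norm_num
        · intro s hs
          rw [Set.uIcc_of_le (by norm_num : (0:ℝ) ≤ 1/2)] at hs
          show |s - 1/2| - 1/4 = 1/4 + -1 * s
          rw [abs_of_nonpos (by linarith [hs.2])]
          ring
      have e2 : (∫ t in (1/2:ℝ)..1, (|t - 1/2| - 1/4)) = 0 := by
        rw [intervalIntegral.integral_congr (g := fun t => -(3/4) + 1 * t) ?_, lin_int]
        · norm_num
        · intro s hs
          rw [Set.uIcc_of_le (by norm_num : (1/2:ℝ) ≤ 1)] at hs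
          show |s - 1/2| - 1/4 = -(3/4) + 1 * s
          rw [abs_of_nonneg (by linarith [hs.1])]
          ring
      have hxi : ∀ a b : ℝ, IntervalIntegrable (fun t => |t - (1/2:ℝ)| - 1/4) volume a b :=
        fun a b => ((continuous_abs.comp (continuous_id.sub continuous_const)).sub
          continuous_const).intervalIntegrable a b
      have hadd := intervalIntegral.integral_add_adjacent_intervals
        (hxi 0 (1/2)) (hxi (1/2) 1)
      rw [e1, e2] at hadd
      exact hadd.symm.trans (by norm_num)
    · have : essSup (fun t => |if t < (1/2:ℝ) then (-1:ℝ) else 1|)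
          (volume.restrict (Set.Icc (0:ℝ) 1)) = 1 := by
        rw [show (fun t => |if t < (1/2:ℝ) then (-1:ℝ) else 1|) = fun _ => (1:ℝ) from
          funext fun t => by
            by_cases h : t < (1/2:ℝ)
            · rw [if_pos h]; norm_num
            · rw [if_neg h]; norm_num]
        exact essSup_const _ hμ0
      rw [this]
      show c * 1 < |(|(1/2:ℝ) - 1/2| - 1/4)|
      rw [show (|(1/2:ℝ) - 1/2| - 1/4) = -(1/4) by norm_num, abs_neg,
        abs_of_nonneg (by norm_num : (0:ℝ) ≤ 1/4)]
      linarith
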